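/- Let T : PSym(3) → Sym(3) be a continuous isotropic map satisfying the law of superposition and such that T(U) = 0 holds if and only if U = 1. Then there exist constants G, Λ ∈ ℝ with G ≠ 0 and 3Λ + 2G ≠ 0 such that T(U) = 2G · log(U) + Λ · tr(log U) · 1 for all U ∈ PSym(3). -/

import Mathlib

open Matrix

/-- The principal matrix logarithm of a symmetric (positive definite) matrix, obtained by
applying the real logarithm to the eigenvalues in a spectral decomposition (junk value `0`
on non-Hermitian input). -/
noncomputable def matLog (A : Matrix (Fin 3) (Fin 3) ℝ) : Matrix (Fin 3) (Fin 3) ℝ :=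
  if hA : A.IsHermitian then hA.cfc Real.log else 0

/-- If `T : PSym(3) → Sym(3)` is a continuous isotropic map satisfying
the law of superposition and `T(U) = 0 ↔ U = 1`, then there exist constants `G ≠ 0` and
`Λ` with `3Λ + 2G ≠ 0` such that `T(U) = 2G·log(U) + Λ·tr(log U)·1` for all positive
definite `U`. -/
theorem becker_law_from_axioms
    (T : Matrix (Fin 3) (Fin 3) ℝ → Matrix (Fin 3) (Fin 3) ℝ)
    (hSym : ∀ U : Matrix (Fin 3) (Fin 3) ℝ, U.PosDef → (T U).IsHermitian)
    (hCont : ContinuousOn T {U : Matrix (Fin 3) (Fin 3) ℝ | U.PosDef})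
    (hIso : ∀ Q ∈ Matrix.orthogonalGroup (Fin 3) ℝ,
      ∀ U : Matrix (Fin 3) (Fin 3) ℝ, U.PosDef → T (Qᵀ * U * Q) = Qᵀ * T U * Q)
    (hSup : ∀ U₁ U₂ : Matrix (Fin 3) (Fin 3) ℝ, U₁.PosDef → U₂.PosDef →
      U₁ * U₂ = U₂ * U₁ → T (U₁ * U₂) = T U₁ + T U₂)
    (hZero : ∀ U : Matrix (Fin 3) (Fin 3) ℝ, U.PosDef → (T U = 0 ↔ U = 1)) :
    ∃ G Lam : ℝ, G ≠ 0 ∧ 3 * Lam + 2 * G ≠ 0 ∧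
      ∀ U : Matrix (Fin 3) (Fin 3) ℝ, U.PosDef →
        T U = (2 * G) • matLog U + (Lam * (matLog U).trace) • 1 := by
  classical
  -- the diagonal exponential map
  set E : (Fin 3 → ℝ) → Matrix (Fin 3) (Fin 3) ℝ :=
    fun x => diagonal (fun i => Real.exp (x i)) with hE_def
  have hEpos : ∀ x, (E x).PosDef := fun x =>
    posDef_diagonal_iff.mpr fun i => Real.exp_pos _
  have hEmul : ∀ x y, E x * E y = E (x + y) := by
    intro x y
    rw [hE_def]
    dsimp only
    rw [diagonal_mul_diagonal]
    congr 1
    funext i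
    simp [Real.exp_add]
  set g : (Fin 3 → ℝ) → Matrix (Fin 3) (Fin 3) ℝ := fun x => T (E x) with hg_def
  have hadd : ∀ x y, g (x + y) = g x + g y := by
    intro x y
    rw [hg_def]
    dsimp only
    rw [← hEmul]
    exact hSup _ _ (hEpos x) (hEpos y) (by rw [hEmul, hEmul, add_comm])
  have hcont : Continuous g := by
    have hEc : Continuous E := by
      apply Continuous.matrix_diagonal
      exact continuous_pi fun i => Real.continuous_exp.comp (continuous_apply i)
    exact hCont.comp_continuous hEc fun x => hEpos x
  set G0 : (Fin 3 → ℝ) →+ Matrix (Fin 3) (Fin 3) ℝ := AddMonoidHom.mk' g hadd with hG0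
  have hsmul : ∀ (c : ℝ) x, g (c • x) = c • g x := fun c x =>
    map_real_smul G0 hcont c x
  have hsum : ∀ x, g x = ∑ k, x k • g (Pi.single k 1) := by
    intro x
    have h1 : x = ∑ k, x k • (Pi.single k 1 : Fin 3 → ℝ) := by
      have h2 : ∀ k : Fin 3, x k • (Pi.single k 1 : Fin 3 → ℝ) = Pi.single k (x k) := by
        intro k; rw [← Pi.single_smul, smul_eq_mul, mul_one]
      rw [Finset.sum_congr rfl fun k _ => h2 k, Finset.univ_sum_single]
    conv_lhs => rw [h1]
    rw [show g (∑ k, x k • (Pi.single k 1 : Fin 3 → ℝ))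
        = G0 (∑ k, x k • (Pi.single k 1 : Fin 3 → ℝ)) from rfl, map_sum]
    exact Finset.sum_congr rfl fun k _ => hsmul _ _
  -- off-diagonal entries vanish
  have hDiag : ∀ x, ∀ i j : Fin 3, i ≠ j → g x i j = 0 := by
    intro x i j hij
    set s : Fin 3 → ℝ := fun k => if k = j then (-1 : ℝ) else 1 with hs
    have hss : ∀ k, s k * s k = 1 := by
      intro k; by_cases h : k = j <;> simp [hs, h]
    have hstar : star (diagonal s) = diagonal s := by
      rw [star_eq_conjTranspose, conjTranspose_eq_transpose_of_trivial, diagonal_transpose]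
    have hSmem : diagonal s ∈ Matrix.orthogonalGroup (Fin 3) ℝ := by
      rw [mem_orthogonalGroup_iff, diagonal_transpose, diagonal_mul_diagonal]
      ext i j
      by_cases h : i = j
      · subst h
        simp only [diagonal_apply_eq, Pi.mul_apply, Matrix.one_apply_eq]
        exact hss i
      · rw [diagonal_apply_ne _ h, Matrix.one_apply_ne h]
    have hfix : (diagonal s)ᵀ * E x * diagonal s = E x := by
      rw [diagonal_transpose, hE_def]
      dsimp only
      rw [diagonal_mul_diagonal, diagonal_mul_diagonal]
      ext i j
      by_cases h : i = j
      · subst h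
        simp only [diagonal_apply_eq, Pi.mul_apply]
        rw [mul_comm (s i), mul_assoc, hss, mul_one]
      · rw [diagonal_apply_ne _ h, diagonal_apply_ne _ h]
    have h1 := hIso (diagonal s) hSmem (E x) (hEpos x)
    rw [hfix, diagonal_transpose] at h1
    have h2 := congrFun (congrFun h1 i) j
    rw [Matrix.mul_diagonal, Matrix.diagonal_mul] at h2
    have hsi : s i = 1 := by simp [hs, hij]
    have hsj : s j = -1 := by simp [hs]
    rw [hsi, hsj, one_mul] at h2
    -- h2 : g x i j = g x i j * (-1)
    have : g x i j = - g x i j := by linarith [h2, mul_neg_one (g x i j)]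
    linarith
  -- permutation equivariance
  have hPerm : ∀ (σ : Equiv.Perm (Fin 3)) x, g (x ∘ σ) = (g x).submatrix σ σ := by
    intro σ x
    set Q : Matrix (Fin 3) (Fin 3) ℝ := (σ.symm.toPEquiv.toMatrix : Matrix (Fin 3) (Fin 3) ℝ)
      with hQ
    have hQT : Qᵀ = (σ.toPEquiv.toMatrix : Matrix (Fin 3) (Fin 3) ℝ) := by
      rw [hQ, ← PEquiv.toMatrix_symm, ← Equiv.toPEquiv_symm, Equiv.symm_symm]
    have hQmem : Q ∈ Matrix.orthogonalGroup (Fin 3) ℝ := by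
      rw [mem_orthogonalGroup_iff, hQT, hQ]
      show (σ.symm.toPEquiv.toMatrix : Matrix (Fin 3) (Fin 3) ℝ) * σ.toPEquiv.toMatrix = 1
      rw [PEquiv.toMatrix_toPEquiv_mul]
      ext i j
      simp [PEquiv.toMatrix_apply, Equiv.toPEquiv_apply, Matrix.one_apply]
    have hconj : ∀ M : Matrix (Fin 3) (Fin 3) ℝ, Qᵀ * M * Q = M.submatrix σ σ := by
      intro M
      rw [hQT, PEquiv.toMatrix_toPEquiv_mul, hQ]
      show (M.submatrix σ id) * (σ.symm.toPEquiv.toMatrix : Matrix (Fin 3) (Fin 3) ℝ) = _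
      rw [PEquiv.mul_toMatrix_toPEquiv, submatrix_submatrix]
      simp
    have h1 := hIso Q hQmem (E x) (hEpos x)
    rw [hconj, hconj] at h1
    have hEsub : (E x).submatrix σ σ = E (x ∘ σ) := by
      rw [hE_def]
      dsimp only
      rw [submatrix_diagonal _ σ σ.injective]
      rfl
    rw [hEsub] at h1
    exact h1
  set a : ℝ := g (Pi.single 0 1) 0 0 with ha_def
  set b : ℝ := g (Pi.single 0 1) 1 1 with hb_def
  have hsingle : ∀ k i : Fin 3, g (Pi.single k 1) i i = if i = k then a else b := by
    have key : ∀ (σ : Equiv.Perm (Fin 3)) (i : Fin 3),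
        g (Pi.single (σ.symm 0) (1 : ℝ)) i i = g (Pi.single 0 1) (σ i) (σ i) := by
      intro σ i
      have hx : (Pi.single 0 1 : Fin 3 → ℝ) ∘ σ = Pi.single (σ.symm 0) 1 := by
        funext m
        simp only [Function.comp_apply, Pi.single_apply]
        simp [Equiv.apply_eq_iff_eq_symm_apply]
      have h1 := congrFun (congrFun (hPerm σ (Pi.single 0 1)) i) i
      rw [hx] at h1
      exact h1
    intro k i
    by_cases h : i = k
    · subst h
      have h1 := key (Equiv.swap 0 i) i
      rw [Equiv.symm_swap, Equiv.swap_apply_left, Equiv.swap_apply_right] at h1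
      simpa using h1
    · set i' := Equiv.swap (0 : Fin 3) k i with hi'
      have hi'0 : i' ≠ 0 := by
        intro h0
        apply h
        have h2 := congrArg (Equiv.swap (0 : Fin 3) k) h0
        rwa [hi', Equiv.swap_apply_self, Equiv.swap_apply_left] at h2
      set σ := (Equiv.swap (0 : Fin 3) k).trans (Equiv.swap 1 i') with hσ
      have hσk : σ.symm 0 = k := by
        have h3 : σ k = 0 := by
          rw [hσ]
          show Equiv.swap (1 : Fin 3) i' (Equiv.swap (0 : Fin 3) k k) = 0
          rw [Equiv.swap_apply_right]
          exact Equiv.swap_apply_of_ne_of_ne (by decide) (Ne.symm hi'0)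
        rw [← h3, Equiv.symm_apply_apply]
      have hσi : σ i = 1 := by
        rw [hσ]
        show Equiv.swap (1 : Fin 3) i' (Equiv.swap (0 : Fin 3) k i) = 1
        rw [← hi', Equiv.swap_apply_right]
      have h1 := key σ i
      rw [hσk, hσi] at h1
      simp only [if_neg h]
      exact h1
  -- the structural formula
  have hform : ∀ x, g x = (a - b) • diagonal x
      + (b * ∑ k, x k) • (1 : Matrix (Fin 3) (Fin 3) ℝ) := by
    intro x
    ext i j
    by_cases hij : i = j
    · subst hij
      rw [hsum x]
      simp only [Matrix.sum_apply, Matrix.smul_apply, smul_eq_mul, hsingle,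
        Matrix.add_apply, Matrix.diagonal_apply_eq, Matrix.one_apply_eq, mul_one]
      have h1 : ∀ k ∈ Finset.univ, x k * (if i = k then a else b)
          = (if i = k then x k * (a - b) else 0) + x k * b := by
        intro k _; split <;> ring
      rw [Finset.sum_congr rfl h1, Finset.sum_add_distrib, Finset.sum_ite_eq]
      simp only [Finset.mem_univ, if_pos, ← Finset.sum_mul]
      ring
    · rw [hDiag x i j hij]
      simp [Matrix.diagonal_apply_ne _ hij, Matrix.one_apply_ne hij]
  -- the zero condition
  have hZg : ∀ x, g x = 0 → x = 0 := by
    intro x hx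
    have hEx : E x = 1 := (hZero (E x) (hEpos x)).mp hx
    funext i
    have h1 := congrFun (congrFun hEx i) i
    rw [hE_def] at h1
    simp only [diagonal_apply_eq, one_apply_eq] at h1
    have := congrArg Real.log h1
    rwa [Real.log_exp, Real.log_one] at this
  have hab : a ≠ b := by
    intro habeq
    set x : Fin 3 → ℝ := ![1, -1, 0] with hx
    have hsum0 : ∑ k, x k = 0 := by
      rw [Fin.sum_univ_three]; norm_num [hx]; rfl
    have hx0 : g x = 0 := by
      rw [hform, hsum0, habeq]
      simp
    have h1 := congrFun (hZg x hx0) 0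
    norm_num [hx] at h1
  have ha2b : a + 2 * b ≠ 0 := by
    intro habeq
    set x : Fin 3 → ℝ := fun _ => 1 with hx
    have hsum3 : ∑ k, x k = 3 := by
      rw [Fin.sum_univ_three]; norm_num [hx]
    have hdx : diagonal x = (1 : Matrix (Fin 3) (Fin 3) ℝ) := by
      rw [hx, ← diagonal_one]
    have hx0 : g x = 0 := by
      rw [hform, hsum3, hdx, ← add_smul]
      rw [show a - b + b * 3 = a + 2 * b by ring, habeq, zero_smul]
    have h1 := congrFun (hZg x hx0) 0
    norm_num [hx] at h1
  refine ⟨(a - b) / 2, b, div_ne_zero (sub_ne_zero.mpr hab) two_ne_zero, ?_, ?_⟩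
  · rw [show 3 * b + 2 * ((a - b) / 2) = a + 2 * b by ring]
    exact ha2b
  · intro U hU
    have hH : U.IsHermitian := hU.1
    set V : Matrix (Fin 3) (Fin 3) ℝ := (hH.eigenvectorUnitary : Matrix (Fin 3) (Fin 3) ℝ)
      with hV
    set ev : Fin 3 → ℝ := hH.eigenvalues with hev
    set x : Fin 3 → ℝ := fun i => Real.log (ev i) with hx
    have hExD : E x = diagonal ev := by
      rw [hE_def]
      dsimp only
      ext i j
      by_cases h : i = j
      · subst h
        rw [diagonal_apply_eq, diagonal_apply_eq]
        exact Real.exp_log (hU.eigenvalues_pos i)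
      · rw [diagonal_apply_ne _ h, diagonal_apply_ne _ h]
    have hVmem : V ∈ Matrix.orthogonalGroup (Fin 3) ℝ := hH.eigenvectorUnitary.2
    have hQmem : star V ∈ Matrix.orthogonalGroup (Fin 3) ℝ := Unitary.star_mem hVmem
    have hstarV : star V = Vᵀ := by
      rw [star_eq_conjTranspose, conjTranspose_eq_transpose_of_trivial]
    have hQT : (star V)ᵀ = V := by rw [hstarV, transpose_transpose]
    have hspec : U = V * diagonal ev * star V := by
      have h1 := hH.spectral_theorem
      rwa [show (RCLike.ofReal ∘ hH.eigenvalues : Fin 3 → ℝ) = ev from rfl] at h1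
    have hUdec : V * E x * star V = U := by rw [hExD]; exact hspec.symm
    have hiso := hIso (star V) hQmem (E x) (hEpos x)
    rw [hQT, hUdec] at hiso
    -- hiso : T U = V * T (E x) * star V
    have hlog : matLog U = V * diagonal x * star V := by
      rw [matLog, dif_pos hH, Matrix.IsHermitian.cfc]
      rfl
    have hsVV : star V * V = 1 := Unitary.star_mul_self_of_mem hVmem
    have hVsV : V * star V = 1 := Unitary.mul_star_self_of_mem hVmem
    have htr : (matLog U).trace = ∑ i, x i := by
      rw [hlog, Matrix.trace_mul_cycle, hsVV, one_mul, trace_diagonal]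
    have hTEx : T (E x) = g x := rfl
    rw [hiso, hTEx, hform x, mul_add, add_mul, Matrix.mul_smul, Matrix.smul_mul,
      Matrix.mul_smul, Matrix.smul_mul, mul_one, hVsV,
      ← hlog, htr, show (2 : ℝ) * ((a - b) / 2) = a - b by ring]
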